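/- Let λ > 0, σ > 0 and H ∈ (1/2, 1). Then, as t → 0⁺, −(σ²H(2H−1)/2) ∫_{0}^{∞} e^{−λw} ( (t+w)^{2H−2} − |t−w|^{2H−2} ) dw = σ²H·t^{2H−1} + o(t^{2H−1}); equivalently, lim_{t → 0⁺} t^{1−2H} ∫_{0}^{∞} e^{−λw} ( (t+w)^{2H−2} − |t−w|^{2H−2} ) dw = −2/(2H−1). -/

import Mathlib

open MeasureTheory Real Set Filter Asymptotics intervalIntegral

lemma aux_Ioc (β : ℝ) (h1 : -1 < β) (h2 : β < 0) :
    IntegrableOn (fun y : ℝ => (1+y) ^ β - |1-y| ^ β) (Ioc 0 1) ∧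
    ∫ y in Ioc (0:ℝ) 1, ((1+y) ^ β - |1-y| ^ β) = (2 ^ (β+1) - 1) / (β+1) - 1/(β+1) := by
  have hp : 0 < β + 1 := by linarith
  have ha : IntervalIntegrable (fun y : ℝ => (1+y) ^ β) volume 0 1 := by
    apply ContinuousOn.intervalIntegrable
    apply ContinuousOn.rpow_const
    · fun_prop
    · intro x hx
      rw [uIcc_of_le zero_le_one] at hx
      left; nlinarith [hx.1]
  have hb : IntervalIntegrable (fun y : ℝ => (1-y) ^ β) volume 0 1 := by
    have := (intervalIntegral.intervalIntegrable_rpow' (a := 0) (b := 1) h1).comp_sub_left 1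
    simpa using this.symm
  have heq : EqOn (fun y : ℝ => (1+y) ^ β - |1-y| ^ β)
      (fun y : ℝ => (1+y) ^ β - (1-y) ^ β) (Ioc 0 1) := by
    intro y hy
    simp only
    rw [abs_of_nonneg (by linarith [hy.2])]
  constructor
  · apply IntegrableOn.congr_fun _ heq.symm measurableSet_Ioc
    rw [← intervalIntegrable_iff_integrableOn_Ioc_of_le zero_le_one] at *
    exact ha.sub hb
  · rw [setIntegral_congr_fun measurableSet_Ioc heq,
      ← intervalIntegral.integral_of_le zero_le_one,
      intervalIntegral.integral_sub ha hb]
    have e1 : (∫ y in (0:ℝ)..1, (1+y) ^ β) = (2 ^ (β+1) - 1) / (β+1) := by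
      have := intervalIntegral.integral_comp_add_left (a := 0) (b := 1)
        (fun x : ℝ => x ^ β) 1
      rw [this, integral_rpow (Or.inl h1)]
      norm_num
    have e2 : (∫ y in (0:ℝ)..1, (1-y) ^ β) = 1 / (β+1) := by
      have := intervalIntegral.integral_comp_sub_left (a := 0) (b := 1)
        (fun x : ℝ => x ^ β) 1
      rw [this]
      norm_num [integral_rpow (Or.inl h1), zero_rpow (ne_of_gt hp)]
    rw [e1, e2]

lemma aux_tail_tendsto (p : ℝ) (hp0 : 0 < p) (hp1 : p < 1) :
    Tendsto (fun y : ℝ => (y-1) ^ p - (1+y) ^ p) atTop (nhds 0) := by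
  have key : ∀ᶠ y : ℝ in atTop, -(2 * p * (y-1) ^ (p-1)) ≤ (y-1) ^ p - (1+y) ^ p := by
    filter_upwards [eventually_gt_atTop 1] with y hy
    have hy1 : (0:ℝ) < y - 1 := by linarith
    have hfact : (1 + y) = (y - 1) * (1 + 2/(y-1)) := by field_simp; ring
    have hb : (1 + y) ^ p = (y-1) ^ p * (1 + 2/(y-1)) ^ p := by
      rw [hfact, mul_rpow hy1.le (by positivity)]
    have hs : (0:ℝ) < 2/(y-1) := by positivity
    have hBer : (1 + 2/(y-1)) ^ p ≤ 1 + p * (2/(y-1)) :=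
      rpow_one_add_le_one_add_mul_self (by linarith) hp0.le hp1.le
    have h3 : (1 + y) ^ p ≤ (y-1) ^ p + 2 * p * (y-1) ^ (p-1) := by
      rw [hb]
      have := mul_le_mul_of_nonneg_left hBer (rpow_nonneg hy1.le p)
      refine this.trans (le_of_eq ?_)
      rw [mul_add, mul_one, rpow_sub_one hy1.ne', ]
      field_simp
    linarith
  have key2 : ∀ᶠ y : ℝ in atTop, (y-1) ^ p - (1+y) ^ p ≤ 0 := by
    filter_upwards [eventually_gt_atTop 1] with y hy
    have : (y-1) ^ p ≤ (1+y) ^ p := rpow_le_rpow (by linarith) (by linarith) hp0.le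
    linarith
  have hlim : Tendsto (fun y : ℝ => -(2 * p * (y-1) ^ (p-1))) atTop (nhds 0) := by
    have h0 : Tendsto (fun y : ℝ => (y-1) ^ (p-1)) atTop (nhds 0) := by
      have := (tendsto_rpow_neg_atTop (y := 1 - p) (by linarith)).comp
        (tendsto_atTop_add_const_right atTop (-1) tendsto_id)
      refine (this.congr (fun y => ?_))
      simp [Function.comp, neg_sub]
      ring_nf
    have := (h0.const_mul (2*p)).neg
    simpa using this
  exact tendsto_of_tendsto_of_tendsto_of_le_of_le' hlim tendsto_const_nhds key key2

lemma aux_Ioi (β : ℝ) (h1 : -1 < β) (h2 : β < 0) :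
    IntegrableOn (fun y : ℝ => (1+y) ^ β - |1-y| ^ β) (Ioi 1) ∧
    ∫ y in Ioi (1:ℝ), ((1+y) ^ β - |1-y| ^ β) = -(2 ^ (β+1) / (β+1)) := by
  have hp : 0 < β + 1 := by linarith
  set g : ℝ → ℝ := fun y => ((y-1) ^ (β+1) - (1+y) ^ (β+1)) / (β+1) with hg
  set g' : ℝ → ℝ := fun y => (y-1) ^ β - (1+y) ^ β with hg'
  have hcont : Continuous g := by
    apply Continuous.div_const
    apply Continuous.sub
    · exact (continuous_id.sub continuous_const).rpow_const (fun x => Or.inr hp.le)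
    · exact (continuous_const.add continuous_id).rpow_const (fun x => Or.inr hp.le)
  have hderiv : ∀ x ∈ Ioi (1:ℝ), HasDerivAt g (g' x) x := by
    intro x hx
    have hx1 : (0:ℝ) < x - 1 := by simp at hx; linarith
    have d1 : HasDerivAt (fun y : ℝ => (y-1) ^ (β+1)) ((β+1) * (x-1) ^ β) x := by
      have := (Real.hasDerivAt_rpow_const (x := x - 1) (p := β+1) (Or.inl hx1.ne')).comp
        x ((hasDerivAt_id x).sub_const 1)
      simpa [Function.comp_def, add_sub_cancel_right] using this
    have d2 : HasDerivAt (fun y : ℝ => (1+y) ^ (β+1)) ((β+1) * (1+x) ^ β) x := by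
      have := (Real.hasDerivAt_rpow_const (x := 1 + x) (p := β+1)
        (Or.inl (by linarith : (1:ℝ)+x ≠ 0))).comp x ((hasDerivAt_id x).const_add 1)
      simpa [Function.comp_def, add_sub_cancel_right] using this
    have := (d1.sub d2).div_const (β+1)
    refine this.congr_deriv ?_
    rw [hg', div_eq_iff hp.ne']
    ring
  have hg'pos : ∀ x ∈ Ioi (1:ℝ), 0 ≤ g' x := by
    intro x hx
    simp only [mem_Ioi] at hx
    have : (1+x) ^ β ≤ (x-1) ^ β :=
      rpow_le_rpow_of_nonpos (by linarith) (by linarith) h2.le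
    simp only [hg', sub_nonneg]; exact this
  have htop : Tendsto g atTop (nhds 0) := by
    have := (aux_tail_tendsto (β+1) hp (by linarith)).div_const (β+1)
    simpa [hg] using this
  have hint : IntegrableOn g' (Ioi 1) :=
    integrableOn_Ioi_deriv_of_nonneg hcont.continuousWithinAt hderiv hg'pos htop
  have hval : ∫ y in Ioi (1:ℝ), g' y = 0 - g 1 :=
    integral_Ioi_of_hasDerivAt_of_nonneg hcont.continuousWithinAt hderiv hg'pos htop
  have heq : EqOn (fun y : ℝ => (1+y) ^ β - |1-y| ^ β) (fun y => -(g' y)) (Ioi 1) := by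
    intro y hy
    simp only [mem_Ioi] at hy
    simp only [hg']
    rw [abs_of_neg (by linarith : (1:ℝ) - y < 0)]
    ring_nf
  constructor
  · have hneg : IntegrableOn (fun y => -(g' y)) (Ioi 1) := hint.neg
    exact hneg.congr_fun heq.symm measurableSet_Ioi
  · rw [setIntegral_congr_fun measurableSet_Ioi heq, MeasureTheory.integral_neg, hval]
    norm_num [hg, zero_rpow hp.ne']
    ring

lemma aux_total (β : ℝ) (h1 : -1 < β) (h2 : β < 0) :
    IntegrableOn (fun y : ℝ => (1+y) ^ β - |1-y| ^ β) (Ioi 0) ∧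
    ∫ y in Ioi (0:ℝ), ((1+y) ^ β - |1-y| ^ β) = -2/(β+1) := by
  have hp : (0:ℝ) < β + 1 := by linarith
  obtain ⟨i1, v1⟩ := aux_Ioc β h1 h2
  obtain ⟨i2, v2⟩ := aux_Ioi β h1 h2
  have hu : Ioc (0:ℝ) 1 ∪ Ioi 1 = Ioi 0 := Ioc_union_Ioi_eq_Ioi zero_le_one
  have hd : Disjoint (Ioc (0:ℝ) 1) (Ioi 1) := Ioc_disjoint_Ioi le_rfl
  constructor
  · rw [← hu]; exact i1.union i2
  · rw [← hu, setIntegral_union hd measurableSet_Ioi i1 i2, v1, v2]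
    field_simp
    ring

/-- For `λ > 0`, `σ > 0` and `H ∈ (1/2, 1)`, as `t → 0⁺`,
`-(σ² H (2H-1)/2) ∫_0^∞ e^{-λw} ((t+w)^{2H-2} - |t-w|^{2H-2}) dw = σ² H t^{2H-1} + o(t^{2H-1})`;
equivalently `lim_{t→0⁺} t^{1-2H} ∫_0^∞ e^{-λw} ((t+w)^{2H-2} - |t-w|^{2H-2}) dw = -2/(2H-1)`. -/
theorem fou_variogram_smallTime_asymptotics
    (lam sigma H : ℝ) (hlam : 0 < lam) (hsigma : 0 < sigma)
    (hH : H ∈ Set.Ioo (1 / 2 : ℝ) 1) :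
    (fun t : ℝ =>
        -(sigma ^ 2 * H * (2 * H - 1) / 2) *
            (∫ w in Set.Ioi (0 : ℝ),
              Real.exp (-lam * w) * ((t + w) ^ (2 * H - 2) - |t - w| ^ (2 * H - 2)))
          - sigma ^ 2 * H * t ^ (2 * H - 1))
      =o[nhdsWithin 0 (Set.Ioi 0)] (fun t : ℝ => t ^ (2 * H - 1)) ∧
    Filter.Tendsto
      (fun t : ℝ =>
        t ^ (1 - 2 * H) *
          ∫ w in Set.Ioi (0 : ℝ),
            Real.exp (-lam * w) * ((t + w) ^ (2 * H - 2) - |t - w| ^ (2 * H - 2)))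
      (nhdsWithin 0 (Set.Ioi 0)) (nhds (-2 / (2 * H - 1))) := by
  obtain ⟨hH1, hH2⟩ := hH
  have hβ1 : (-1:ℝ) < 2*H - 2 := by linarith
  have hβ2 : (2*H - 2:ℝ) < 0 := by linarith
  have hp : (0:ℝ) < 2*H - 1 := by linarith
  obtain ⟨hInt, hVal⟩ := aux_total (2*H-2) hβ1 hβ2
  set l := nhdsWithin (0:ℝ) (Set.Ioi 0) with hl
  set Δ : ℝ → ℝ := fun y => (1+y) ^ (2*H-2) - |1-y| ^ (2*H-2) with hΔ
  set F : ℝ → ℝ := fun t => ∫ y in Ioi (0:ℝ), Real.exp (-lam * (t*y)) * Δ y with hFdef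
  -- DCT
  have hF : Tendsto F l (nhds (-2 / (2*H-1))) := by
    have hmeasΔ : Measurable Δ := by fun_prop
    have key : Tendsto F l (nhds (∫ y in Ioi (0:ℝ), Δ y)) := by
      apply MeasureTheory.tendsto_integral_filter_of_dominated_convergence (fun y => |Δ y|)
      · filter_upwards with t
        exact ((by fun_prop : Measurable fun y : ℝ =>
          Real.exp (-lam * (t*y)) * Δ y)).aestronglyMeasurable
      · filter_upwards [self_mem_nhdsWithin] with t ht
        filter_upwards [ae_restrict_mem measurableSet_Ioi] with y hy
        have ht' : (0:ℝ) < t := ht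
        have hy' : (0:ℝ) < y := hy
        have h1 : Real.exp (-lam * (t*y)) ≤ 1 := by
          rw [Real.exp_le_one_iff]
          nlinarith [mul_pos (mul_pos hlam ht') hy']
        rw [Real.norm_eq_abs, abs_mul, abs_of_pos (Real.exp_pos _)]
        calc Real.exp (-lam * (t*y)) * |Δ y| ≤ 1 * |Δ y| :=
              mul_le_mul_of_nonneg_right h1 (abs_nonneg _)
          _ = |Δ y| := one_mul _
      · exact hInt.abs
      · filter_upwards with y
        have hc : Continuous fun t : ℝ => Real.exp (-lam * (t*y)) * Δ y := by fun_prop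
        have h0 := (hc.tendsto 0).mono_left (nhdsWithin_le_nhds (s := Set.Ioi (0:ℝ)))
        rw [hl]
        simpa using h0
    have : (∫ y in Ioi (0:ℝ), Δ y) = -2 / (2*H-1) := by
      rw [hΔ] at *
      rw [hVal]; ring_nf
    rwa [this] at key
  -- change of variables
  have hkey : ∀ t : ℝ, t ∈ Ioi (0:ℝ) →
      (∫ w in Set.Ioi (0 : ℝ),
        Real.exp (-lam * w) * ((t + w) ^ (2 * H - 2) - |t - w| ^ (2 * H - 2)))
      = t ^ (2*H-1) * F t := by
    intro t ht
    have ht' : (0:ℝ) < t := ht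
    set f : ℝ → ℝ := fun w =>
      Real.exp (-lam * w) * ((t + w) ^ (2 * H - 2) - |t - w| ^ (2 * H - 2)) with hf
    have hcv := integral_comp_mul_left_Ioi f 0 ht'
    rw [mul_zero] at hcv
    have h2 : (∫ w in Ioi (0:ℝ), f w) = t * ∫ x in Ioi (0:ℝ), f (t*x) := by
      rw [hcv, smul_eq_mul, ← mul_assoc, mul_inv_cancel₀ ht'.ne', one_mul]
    have h3 : EqOn (fun x => f (t*x))
        (fun x => t ^ (2*H-2) * (Real.exp (-lam * (t*x)) * Δ x)) (Ioi 0) := by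
      intro x hx
      have hx' : (0:ℝ) < x := hx
      simp only [hf, hΔ]
      have e1 : (t + t*x) ^ (2*H-2) = t ^ (2*H-2) * (1+x) ^ (2*H-2) := by
        rw [show t + t*x = t*(1+x) by ring, Real.mul_rpow ht'.le (by linarith)]
      have e2 : |t - t*x| ^ (2*H-2) = t ^ (2*H-2) * |1-x| ^ (2*H-2) := by
        rw [show t - t*x = t*(1-x) by ring, abs_mul, abs_of_pos ht',
          Real.mul_rpow ht'.le (abs_nonneg _)]
      rw [e1, e2]
      ring
    have h4 : (∫ x in Ioi (0:ℝ), f (t*x))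
        = t ^ (2*H-2) * F t := by
      rw [setIntegral_congr_fun measurableSet_Ioi h3, hFdef]
      exact integral_const_mul _ _
    rw [h2, h4, ← mul_assoc]
    congr 1
    rw [show (2*H-1) = (2*H-2) + 1 by ring, Real.rpow_add_one ht'.ne']
    ring
  constructor
  · -- little-o statement
    have h2H : (2*H-1 : ℝ) ≠ 0 := hp.ne'
    set c : ℝ := -(sigma ^ 2 * H * (2 * H - 1) / 2) with hc
    have hlim0 : Tendsto (fun t => c * F t - sigma^2*H) l (nhds 0) := by
      have h0 : c * (-2 / (2*H-1)) - sigma^2*H = 0 := by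
        field_simp [hc]
        rw [hc]; ring
      have := ((hF.const_mul c).sub_const (sigma^2*H))
      rwa [h0] at this
    have hoo : (fun t => c * F t - sigma^2*H) =o[l] (fun _ : ℝ => (1:ℝ)) :=
      (isLittleO_one_iff ℝ).2 hlim0
    have hbig := (isBigO_refl (fun t : ℝ => t ^ (2*H-1)) l).mul_isLittleO hoo
    refine hbig.congr' ?_ ?_
    · filter_upwards [self_mem_nhdsWithin] with t ht
      rw [hkey t ht]
      ring
    · filter_upwards with t
      simp
  · -- tendsto statement
    refine Tendsto.congr' ?_ hF
    filter_upwards [self_mem_nhdsWithin] with t ht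
    have ht' : (0:ℝ) < t := ht
    rw [hkey t ht, ← mul_assoc, ← Real.rpow_add ht']
    norm_num
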